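/- arXiv:1008.4533 — 3 statements merged into one kernel-verified Lean document; each statement's English description precedes it below -/
import Mathlib

section
/- If p ∈ F_{2,4} is a positive definite binary quartic form, then there exist λ ∈ (−1/3, 1/3] and an invertible 2×2 real matrix M such that p = f_λ ∘ M, where f_λ(x,y) = x⁴ + 6λx²y² + y⁴. -/
open MvPolynomial Filter

/-- Composition of a form with a matrix: `(p ∘ M)(x) = p (M x)`. -/
noncomputable def compMat {n : ℕ} (p : MvPolynomial (Fin n) ℝ)
    (M : Matrix (Fin n) (Fin n) ℝ) : MvPolynomial (Fin n) ℝ :=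
  aeval (fun j => ∑ k, MvPolynomial.C (M j k) * X k) p

/-- Coefficientwise convergence of a sequence of polynomials. -/
def CoeffTendsto {n : ℕ} (f : ℕ → MvPolynomial (Fin n) ℝ)
    (q : MvPolynomial (Fin n) ℝ) : Prop :=
  ∀ i : Fin n →₀ ℕ, Tendsto (fun m => (f m).coeff i) atTop (nhds (q.coeff i))

/-- A blender: a closed convex cone of degree-`d` forms closed under linear changes of variables. -/
def IsBlender (n d : ℕ) (B : Set (MvPolynomial (Fin n) ℝ)) : Prop :=
  (∀ p ∈ B, p.IsHomogeneous d) ∧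
  (0 ∈ B) ∧
  (∀ p ∈ B, ∀ q ∈ B, p + q ∈ B) ∧
  (∀ (f : ℕ → MvPolynomial (Fin n) ℝ) (q : MvPolynomial (Fin n) ℝ),
      (∀ m, f m ∈ B) → CoeffTendsto f q → q ∈ B) ∧
  (∀ p ∈ B, ∀ M : Matrix (Fin n) (Fin n) ℝ, compMat p M ∈ B)

/-- The inner product `[p,q] = Σ_i c(i) a(p;i) a(q;i)`, where the coefficient of `x^i`
is `c(i) a(p;i)` and `c(i)` is the multinomial coefficient. -/
noncomputable def formInner {n : ℕ} (p q : MvPolynomial (Fin n) ℝ) : ℝ :=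
  ∑ i ∈ p.support ∪ q.support,
    p.coeff i * q.coeff i / (Nat.multinomial Finset.univ (fun j => i j) : ℝ)

/-- The cone of psd forms of degree `d`. -/
def Psd (n d : ℕ) : Set (MvPolynomial (Fin n) ℝ) :=
  {p | p.IsHomogeneous d ∧ ∀ u : Fin n → ℝ, 0 ≤ eval u p}

/-- The linear form with coefficients `a`. -/
noncomputable def linForm {n : ℕ} (a : Fin n → ℝ) : MvPolynomial (Fin n) ℝ :=
  ∑ j, MvPolynomial.C (a j) * X j

/-- The cone `Q_{n,d}` of sums of `d`-th powers of real linear forms. -/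
def SumPow (n d : ℕ) : Set (MvPolynomial (Fin n) ℝ) :=
  {p | ∃ (s : ℕ) (a : Fin s → Fin n → ℝ), p = ∑ k, (linForm (a k)) ^ d}

/-- The binary quartic `f_λ(x,y) = x⁴ + 6λ x²y² + y⁴`. -/
noncomputable def fQuartic (l : ℝ) : MvPolynomial (Fin 2) ℝ :=
  X 0 ^ 4 + MvPolynomial.C (6 * l) * X 0 ^ 2 * X 1 ^ 2 + X 1 ^ 4



section Aux

/-- A monic quadratic with no real root has negative discriminant (via factorization data). -/
lemma disc_neg (u v w q r s : ℝ) (h1 : v + w - u^2 = q) (h2 : u*(w - v) = r) (h3 : v*w = s)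
    (hpos : ∀ t : ℝ, 0 < t^4 + q*t^2 + r*t + s) : u^2 < 4*v := by
  by_contra h
  push_neg at h
  set D := Real.sqrt (u^2 - 4*v) with hDdef
  have hD : D^2 = u^2 - 4*v := Real.sq_sqrt (by linarith)
  set t₀ := (-u + D)/2 with ht₀
  have hroot : t₀^2 + u*t₀ + v = 0 := by rw [ht₀]; linear_combination hD/4
  have hid : t₀^4 + q*t₀^2 + r*t₀ + s = (t₀^2 + u*t₀ + v)*(t₀^2 - u*t₀ + w) := by
    linear_combination (-t₀^2)*h1 - t₀*h2 - h3
  have hz : t₀^4 + q*t₀^2 + r*t₀ + s = 0 := by rw [hid, hroot, zero_mul]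
  linarith [hpos t₀]

lemma factor_depressed (q r s : ℝ) (hpos : ∀ t : ℝ, 0 < t^4 + q*t^2 + r*t + s) :
    ∃ u v w : ℝ, v + w - u^2 = q ∧ u*(w - v) = r ∧ v*w = s ∧ u^2 < 4*v ∧ u^2 < 4*w := by
  have key : ∃ u v w : ℝ, v + w - u^2 = q ∧ u*(w - v) = r ∧ v*w = s := by
    by_cases hr : r = 0
    · have hs : 0 < s := by have := hpos 0; norm_num at this; linarith
      by_cases hq : q ≤ 2*Real.sqrt s
      · refine ⟨Real.sqrt (2*Real.sqrt s - q), Real.sqrt s, Real.sqrt s, ?_, ?_, ?_⟩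
        · have h1 := Real.sq_sqrt (show (0:ℝ) ≤ 2*Real.sqrt s - q by linarith)
          linarith
        · simp [hr]
        · exact Real.mul_self_sqrt hs.le
      · push_neg at hq
        have hss := Real.sq_sqrt hs.le
        have hsnn := Real.sqrt_nonneg s
        have hq2 : 4*s < q^2 := by nlinarith
        have hE := Real.sq_sqrt (show (0:ℝ) ≤ q^2 - 4*s by linarith)
        refine ⟨0, (q + Real.sqrt (q^2-4*s))/2, (q - Real.sqrt (q^2-4*s))/2, by ring, by
          rw [hr]; ring, by linear_combination -hE/4⟩
    · -- resolvent cubic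
      set K := 1 + 2*|q| + |q^2 - 4*s| + r^2 with hK
      have hq1 : q ≤ |q| := le_abs_self q
      have hq2 : -|q| ≤ q := neg_abs_le q
      have hq3 : (0:ℝ) ≤ |q| := abs_nonneg q
      have hb1 : q^2 - 4*s ≤ |q^2-4*s| := le_abs_self _
      have hb2 : -|q^2-4*s| ≤ q^2-4*s := neg_abs_le _
      have hb3 : (0:ℝ) ≤ |q^2-4*s| := abs_nonneg _
      have hK1 : 1 ≤ K := by nlinarith [sq_nonneg r]
      have hfK : 0 < K^3 + 2*q*K^2 + (q^2-4*s)*K - r^2 := by nlinarith [sq_nonneg K, sq_nonneg r]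
      have hcont : ContinuousOn (fun U : ℝ => U^3 + 2*q*U^2 + (q^2-4*s)*U - r^2) (Set.Icc 0 K) := by
        fun_prop
      have h0K : (0:ℝ) ≤ K := by linarith
      have hmem : (0:ℝ) ∈ Set.Icc ((fun U : ℝ => U^3 + 2*q*U^2 + (q^2-4*s)*U - r^2) 0)
          ((fun U : ℝ => U^3 + 2*q*U^2 + (q^2-4*s)*U - r^2) K) := by
        constructor
        · simp only
          nlinarith [sq_nonneg r, pow_pos (abs_pos.mpr hr) 2]
        · simpa using hfK.le
      obtain ⟨U₀, hU₀mem, hU₀⟩ := intermediate_value_Icc h0K hcont hmem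
      have hU₀' : U₀^3 + 2*q*U₀^2 + (q^2-4*s)*U₀ - r^2 = 0 := hU₀
      have hU₀pos : 0 < U₀ := by
        rcases lt_or_eq_of_le hU₀mem.1 with h | h
        · exact h
        · exfalso
          rw [← h] at hU₀'
          have : r^2 = 0 := by linarith [hU₀']
          exact hr (by nlinarith [this])
      have hu2 : (Real.sqrt U₀)^2 = U₀ := Real.sq_sqrt hU₀pos.le
      set u := Real.sqrt U₀ with hu
      have hupos : 0 < u := Real.sqrt_pos.mpr hU₀pos
      have hune : u ≠ 0 := ne_of_gt hupos
      refine ⟨u, (q + U₀ - r/u)/2, (q + U₀ + r/u)/2, by linear_combination -hu2, ?_, ?_⟩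
      · field_simp; ring
      · have h4 : U₀*(q+U₀)^2 - r^2 = 4*s*U₀ := by linear_combination hU₀'
        field_simp
        nlinarith [h4, hu2]
  obtain ⟨u, v, w, h1, h2, h3⟩ := key
  have hv := disc_neg u v w q r s h1 h2 h3 hpos
  have hw := disc_neg (-u) w v q r s (by linarith) (by linear_combination h2) (by linear_combination h3) hpos
  exact ⟨u, v, w, h1, h2, h3, hv, by nlinarith [hw]⟩


lemma quadpos {B C : ℝ} (hBC : B^2 < 4*C) {z w : ℝ} (h : ¬(z = 0 ∧ w = 0)) :
    0 < z^2 + B*z*w + C*w^2 := by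
  rcases eq_or_ne w 0 with hw | hw
  · have hz : z ≠ 0 := by tauto
    rw [hw]; simp; positivity
  · nlinarith [sq_nonneg (2*z + B*w), sq_nonneg w, (pow_pos (abs_pos.mpr hw) 2), sq_abs w]

lemma rotate_diag (B C : ℝ) (hBC : B^2 < 4*C) :
    ∃ cθ sθ α βe : ℝ, cθ^2 + sθ^2 = 1 ∧ 0 < α ∧ 0 < βe ∧
      ∀ Z W : ℝ, Z^2 + B*Z*W + C*W^2 = α*(cθ*Z + sθ*W)^2 + βe*(-sθ*Z + cθ*W)^2 := by
  -- find θ with mixed coefficient zero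
  obtain ⟨θ, hθmem, hθ⟩ : ∃ θ ∈ Set.Icc 0 (Real.pi/2),
      2*Real.cos θ*Real.sin θ*(C-1) + B*((Real.cos θ)^2 - (Real.sin θ)^2) = 0 := by
    set f : ℝ → ℝ := fun θ => 2*Real.cos θ*Real.sin θ*(C-1) + B*((Real.cos θ)^2 - (Real.sin θ)^2) with hf
    have hcont : ContinuousOn f (Set.Icc 0 (Real.pi/2)) := by fun_prop
    have h0 : f 0 = B := by simp [hf]
    have h1 : f (Real.pi/2) = -B := by simp [hf]
    have hpi : (0:ℝ) ≤ Real.pi/2 := by positivity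
    rcases le_total B 0 with hB | hB
    · have : (0:ℝ) ∈ Set.Icc (f 0) (f (Real.pi/2)) := by rw [h0, h1]; constructor <;> linarith
      obtain ⟨θ, hm, hv⟩ := intermediate_value_Icc hpi hcont this
      exact ⟨θ, hm, hv⟩
    · have : (0:ℝ) ∈ Set.Icc (f (Real.pi/2)) (f 0) := by rw [h0, h1]; constructor <;> linarith
      obtain ⟨θ, hm, hv⟩ := intermediate_value_Icc' hpi hcont this
      exact ⟨θ, hm, hv⟩
  set c := Real.cos θ
  set s := Real.sin θ
  have hc : c^2 + s^2 = 1 := by rw [add_comm]; exact Real.sin_sq_add_cos_sq θ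
  have hcs : ¬(c = 0 ∧ s = 0) := by rintro ⟨h1, h2⟩; rw [h1, h2] at hc; norm_num at hc
  have hcs' : ¬(-s = 0 ∧ c = 0) := by rintro ⟨h1, h2⟩; apply hcs; constructor; exact h2; linarith
  refine ⟨c, s, c^2 + B*c*s + C*s^2, s^2 - B*c*s + C*c^2, hc, quadpos hBC hcs, ?_, ?_⟩
  · have := quadpos hBC hcs'
    nlinarith [this]
  · intro Z W
    have e1 : c*(c*Z + s*W) - s*(-s*Z + c*W) = Z := by linear_combination Z*hc
    have e2 : s*(c*Z + s*W) + c*(-s*Z + c*W) = W := by linear_combination W*hc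
    calc Z^2 + B*Z*W + C*W^2
        = (c*(c*Z + s*W) - s*(-s*Z + c*W))^2
          + B*(c*(c*Z + s*W) - s*(-s*Z + c*W))*(s*(c*Z + s*W) + c*(-s*Z + c*W))
          + C*(s*(c*Z + s*W) + c*(-s*Z + c*W))^2 := by rw [e1, e2]
      _ = (c^2 + B*c*s + C*s^2)*(c*Z + s*W)^2 + (s^2 - B*c*s + C*c^2)*(-s*Z + c*W)^2
          + (2*c*s*(C-1) + B*(c^2 - s^2))*((c*Z+s*W)*(-s*Z + c*W)) := by ring
      _ = (c^2 + B*c*s + C*s^2)*(c*Z + s*W)^2 + (s^2 - B*c*s + C*c^2)*(-s*Z + c*W)^2 := by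
          rw [hθ]; ring


def LinRep (Q R : ℝ → ℝ → ℝ) : Prop :=
  ∃ m00 m01 m10 m11 : ℝ, m00*m11 - m01*m10 ≠ 0 ∧
    ∀ x y : ℝ, Q x y = R (m00*x + m01*y) (m10*x + m11*y)

lemma LinRep.trans {Q R S : ℝ → ℝ → ℝ} (h1 : LinRep Q R) (h2 : LinRep R S) : LinRep Q S := by
  obtain ⟨a, b, c, d, hdet1, h1⟩ := h1
  obtain ⟨e, f, g, h, hdet2, h2⟩ := h2
  refine ⟨e*a + f*c, e*b + f*d, g*a + h*c, g*b + h*d, ?_, ?_⟩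
  · have : (e*a + f*c)*(g*b + h*d) - (e*b + f*d)*(g*a + h*c) = (e*h - f*g)*(a*d - b*c) := by ring
    rw [this]
    exact mul_ne_zero hdet2 hdet1
  · intro x y
    rw [h1, h2]
    ring_nf

set_option maxHeartbeats 1000000 in
theorem core (Q : ℝ → ℝ → ℝ) (a b c d e : ℝ)
    (hQ : ∀ x y : ℝ, Q x y = a*x^4 + b*x^3*y + c*x^2*y^2 + d*x*y^3 + e*y^4)
    (hpd : ∀ x y : ℝ, ¬(x = 0 ∧ y = 0) → 0 < Q x y) :
    ∃ l ∈ Set.Ioc (-(1/3) : ℝ) (1/3), LinRep Q (fun X Y => X^4 + 6*l*X^2*Y^2 + Y^4) := by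
  have ha : 0 < a := by have := hpd 1 0 (by norm_num); rw [hQ] at this; linarith [this]
  have ha' : a ≠ 0 := ne_of_gt ha
  obtain ⟨σ, cq, dq, eq, hdep⟩ : ∃ σ cq dq eq : ℝ,
      ∀ X Y : ℝ, Q (X - σ*Y) Y = a*(X^4 + cq*X^2*Y^2 + dq*X*Y^3 + eq*Y^4) := by
    refine ⟨b/(4*a), (6*a*(b/(4*a))^2 - 3*b*(b/(4*a)) + c)/a,
      (-4*a*(b/(4*a))^3 + 3*b*(b/(4*a))^2 - 2*c*(b/(4*a)) + d)/a,
      (a*(b/(4*a))^4 - b*(b/(4*a))^3 + c*(b/(4*a))^2 - d*(b/(4*a)) + e)/a, fun X Y => ?_⟩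
    rw [hQ]
    field_simp
    ring
  have hGpos : ∀ t : ℝ, 0 < t^4 + cq*t^2 + dq*t + eq := by
    intro t
    have h1 := hpd (t - σ*1) 1 (by simp)
    have h2 : Q (t - σ*1) 1 = a*(t^4 + cq*t^2 + dq*t + eq) := by rw [hdep]; ring
    rw [h2] at h1
    nlinarith [h1, ha]
  obtain ⟨u, v, w, h1, h2, h3, hdv, hdw⟩ := factor_depressed cq dq eq hGpos
  -- step 1 : shear
  have step1 : LinRep Q (fun X Y => a*(X^2 + u*X*Y + v*Y^2)*(X^2 - u*X*Y + w*Y^2)) := by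
    refine ⟨1, σ, 0, 1, by norm_num, fun x y => ?_⟩
    have key := hdep (x + σ*y) y
    rw [show x + σ*y - σ*y = x by ring] at key
    rw [key]
    dsimp only
    linear_combination (-(a*(x + σ*y)^2*y^2))*h1 - (a*(x + σ*y)*y^3)*h2 - (a*y^4)*h3
  -- step 2 : diagonalize the first quadratic factor
  have hγpos : 0 < v - u^2/4 := by linarith
  obtain ⟨γ, hγ, hγ2⟩ : ∃ γ : ℝ, 0 < γ ∧ γ^2 = v - u^2/4 :=
    ⟨Real.sqrt (v - u^2/4), Real.sqrt_pos.mpr hγpos, Real.sq_sqrt hγpos.le⟩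
  have hγ' : γ ≠ 0 := ne_of_gt hγ
  obtain ⟨B, C, hBC, hf2⟩ : ∃ B C : ℝ, B^2 < 4*C ∧
      ∀ X Y : ℝ, (X + (u/2)*Y)^2 + B*(X + (u/2)*Y)*(γ*Y) + C*(γ*Y)^2
        = X^2 - u*X*Y + w*Y^2 := by
    have h4 : (0:ℝ) < γ^2 := by positivity
    refine ⟨-2*u/γ, (3*u^2/4 + w)/γ^2, ?_, fun X Y => ?_⟩
    · rw [show (-2*u/γ)^2 = (4*u^2)/γ^2 by rw [div_pow]; ring,
        show 4*((3*u^2/4 + w)/γ^2) = (3*u^2 + 4*w)/γ^2 by ring,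
        div_lt_div_iff₀ h4 h4]
      nlinarith [hdw, h4]
    · field_simp
      ring
  have step2 : LinRep (fun X Y => a*(X^2 + u*X*Y + v*Y^2)*(X^2 - u*X*Y + w*Y^2))
      (fun Z W => a*(Z^2 + W^2)*(Z^2 + B*Z*W + C*W^2)) := by
    refine ⟨1, u/2, 0, γ, by simpa using hγ', fun X Y => ?_⟩
    dsimp only
    have f1 : (1*X + (u/2)*Y)^2 + (0*X + γ*Y)^2 = X^2 + u*X*Y + v*Y^2 := by
      linear_combination Y^2*hγ2
    have f2 : (1*X + (u/2)*Y)^2 + B*(1*X + (u/2)*Y)*(0*X + γ*Y) + C*(0*X + γ*Y)^2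
        = X^2 - u*X*Y + w*Y^2 := by
      have := hf2 X Y
      linear_combination this
    rw [f1, f2]
  -- step 3 : rotate
  obtain ⟨cθ, sθ, α, βe, hc, hα, hβe, hrot⟩ := rotate_diag B C hBC
  have step3 : LinRep (fun Z W => a*(Z^2 + W^2)*(Z^2 + B*Z*W + C*W^2))
      (fun P R => a*(P^2 + R^2)*(α*P^2 + βe*R^2)) := by
    have hdet : cθ*cθ - sθ*(-sθ) ≠ 0 := by
      intro h0
      nlinarith [hc, h0]
    refine ⟨cθ, sθ, -sθ, cθ, hdet, fun Z W => ?_⟩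
    dsimp only
    have g1 : (cθ*Z + sθ*W)^2 + (-sθ*Z + cθ*W)^2 = Z^2 + W^2 := by
      linear_combination (Z^2 + W^2)*hc
    rw [g1, ← hrot Z W]
  -- step 4 : scale to symmetric form
  obtain ⟨s₁, hs₁pos, hs₁4⟩ : ∃ s₁ : ℝ, 0 < s₁ ∧ s₁^4 = a*α := by
    refine ⟨Real.sqrt (Real.sqrt (a*α)), by positivity, ?_⟩
    rw [show (4:ℕ) = 2*2 from rfl, pow_mul, Real.sq_sqrt (Real.sqrt_nonneg _),
      Real.sq_sqrt (by positivity)]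
  obtain ⟨s₂, hs₂pos, hs₂4⟩ : ∃ s₂ : ℝ, 0 < s₂ ∧ s₂^4 = a*βe := by
    refine ⟨Real.sqrt (Real.sqrt (a*βe)), by positivity, ?_⟩
    rw [show (4:ℕ) = 2*2 from rfl, pow_mul, Real.sq_sqrt (Real.sqrt_nonneg _),
      Real.sq_sqrt (by positivity)]
  obtain ⟨μ, hμ3, hμ'⟩ : ∃ μ : ℝ, 1/3 ≤ μ ∧ 6*μ*(s₁^2*s₂^2) = s₁^4 + s₂^4 := by
    refine ⟨(s₁^4 + s₂^4)/(6*s₁^2*s₂^2), ?_, by field_simp⟩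
    rw [le_div_iff₀ (by positivity)]
    nlinarith [sq_nonneg (s₁^2 - s₂^2)]
  have step4 : LinRep (fun P R => a*(P^2 + R^2)*(α*P^2 + βe*R^2))
      (fun S T => S^4 + 6*μ*S^2*T^2 + T^4) := by
    refine ⟨s₁, 0, 0, s₂, by rw [show s₁*s₂ - 0*0 = s₁*s₂ by ring]; positivity, fun P R => ?_⟩
    dsimp only
    linear_combination (-(P^4) - P^2*R^2)*hs₁4 + (-(R^4) - P^2*R^2)*hs₂4 - (P^2*R^2)*hμ'
  -- step 5 : involution into (-1/3, 1/3]
  have hμpos : 0 < 1 + 3*μ := by linarith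
  obtain ⟨l, hl1, hl2, hll⟩ : ∃ l : ℝ, -(1/3) < l ∧ l ≤ 1/3 ∧ l*(1+3*μ) = 1-μ := by
    refine ⟨(1-μ)/(1+3*μ), ?_, ?_, by field_simp⟩
    · rw [lt_div_iff₀ hμpos]; linarith
    · rw [div_le_iff₀ hμpos]; linarith
  have h2l : 0 < 2 + 6*l := by linarith
  obtain ⟨κ, hκpos, hκ4⟩ : ∃ κ : ℝ, 0 < κ ∧ κ^4*(2+6*l) = 1 := by
    refine ⟨(Real.sqrt (Real.sqrt (2+6*l)))⁻¹, by positivity, ?_⟩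
    have h4 : (Real.sqrt (Real.sqrt (2+6*l)))^4 = 2+6*l := by
      calc (Real.sqrt (Real.sqrt (2+6*l)))^4 = ((Real.sqrt (Real.sqrt (2+6*l)))^2)^2 := by ring
        _ = (Real.sqrt (2+6*l))^2 := by rw [Real.sq_sqrt (Real.sqrt_nonneg _)]
        _ = 2+6*l := Real.sq_sqrt h2l.le
    rw [inv_pow, h4]
    exact inv_mul_cancel₀ (ne_of_gt h2l)
  have step5 : LinRep (fun S T => S^4 + 6*μ*S^2*T^2 + T^4)
      (fun X Y => X^4 + 6*l*X^2*Y^2 + Y^4) := by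
    have hdet : κ*(-κ) - κ*κ ≠ 0 := by nlinarith [hκpos]
    refine ⟨κ, κ, κ, -κ, hdet, fun S T => ?_⟩
    dsimp only
    linear_combination (-(S^4+T^4) - 6*μ*S^2*T^2)*hκ4 + 12*κ^4*S^2*T^2*hll
  exact ⟨l, ⟨hl1, hl2⟩, ((((step1.trans step2).trans step3).trans step4).trans step5)⟩


lemma eval_compMat' {n : ℕ} (p : MvPolynomial (Fin n) ℝ) (M : Matrix (Fin n) (Fin n) ℝ)
    (u : Fin n → ℝ) :
    eval u (aeval (fun j => ∑ k, MvPolynomial.C (M j k) * X k) p)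
      = eval (fun j => ∑ k, M j k * u k) p := by
  induction p using MvPolynomial.induction_on with
  | C r => simp
  | add p q hp hq => simp only [map_add, hp, hq]
  | mul_X p i hp =>
      simp only [map_mul, aeval_X, eval_X, hp]
      congr 1
      simp


lemma homog_repr (p : MvPolynomial (Fin 2) ℝ) (hp : p.IsHomogeneous 4) :
    ∃ a b c d e : ℝ, ∀ u : Fin 2 → ℝ,
      eval u p = a*(u 0)^4 + b*(u 0)^3*(u 1) + c*(u 0)^2*(u 1)^2 + d*(u 0)*(u 1)^3 + e*(u 1)^4 := by
  classical
  set mk : ℕ → ℕ → (Fin 2 →₀ ℕ) := fun i j => Finsupp.single 0 i + Finsupp.single 1 j with hmk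
  have hmkapply : ∀ i j, (mk i j) 0 = i ∧ (mk i j) 1 = j := by
    intro i j
    constructor <;> simp [hmk, Finsupp.single_apply]
  have hne : ∀ i j i' j' : ℕ, i ≠ i' → mk i j ≠ mk i' j' := by
    intro i j i' j' hii h
    exact hii (by rw [← (hmkapply i j).1, h, (hmkapply i' j').1])
  set S : Finset (Fin 2 →₀ ℕ) := {mk 4 0, mk 3 1, mk 2 2, mk 1 3, mk 0 4} with hS
  have hsub : p.support ⊆ S := by
    intro v hv
    have hc : coeff v p ≠ 0 := MvPolynomial.mem_support_iff.mp hv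
    have hdeg := hp hc
    rw [Finsupp.weight_apply, Finsupp.sum_fintype _ _ (by simp)] at hdeg
    have hsum : v 0 + v 1 = 4 := by simpa [Fin.sum_univ_two] using hdeg
    have hv' : v = mk (v 0) (v 1) := by
      ext i
      fin_cases i
      · exact ((hmkapply (v 0) (v 1)).1).symm
      · exact ((hmkapply (v 0) (v 1)).2).symm
    rw [hS]
    simp only [Finset.mem_insert, Finset.mem_singleton]
    have h0 : v 0 = 4 ∧ v 1 = 0 ∨ v 0 = 3 ∧ v 1 = 1 ∨ v 0 = 2 ∧ v 1 = 2 ∨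
        v 0 = 1 ∧ v 1 = 3 ∨ v 0 = 0 ∧ v 1 = 4 := by omega
    rcases h0 with ⟨ha, hb⟩ | ⟨ha, hb⟩ | ⟨ha, hb⟩ | ⟨ha, hb⟩ | ⟨ha, hb⟩ <;>
      rw [hv', ha, hb] <;> tauto
  have hpS : p = ∑ v ∈ S, monomial v (coeff v p) := by
    conv_lhs => rw [p.as_sum]
    exact Finset.sum_subset hsub (fun x _ hx => by
      rw [MvPolynomial.notMem_support_iff.mp hx, map_zero])
  have hevalmk : ∀ (i j : ℕ) (cc : ℝ) (u : Fin 2 → ℝ),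
      eval u (monomial (mk i j) cc) = cc * (u 0)^i * (u 1)^j := by
    intro i j cc u
    rw [eval_monomial, hmk]
    rw [Finsupp.prod_add_index' (fun a => pow_zero _) (fun a b1 b2 => pow_add _ _ _)]
    have h1 : ∀ (k : Fin 2) (n : ℕ), (Finsupp.single k n).prod (fun a e => (u a)^e) = (u k)^n := by
      intro k n
      exact Finsupp.prod_single_index (pow_zero _)
    rw [show (fun (a : Fin 2) => HPow.hPow (u a)) = (fun (a : Fin 2) (e : ℕ) => (u a)^e) from rfl,
      h1, h1]
    ring
  refine ⟨coeff (mk 4 0) p, coeff (mk 3 1) p, coeff (mk 2 2) p, coeff (mk 1 3) p,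
    coeff (mk 0 4) p, fun u => ?_⟩
  conv_lhs => rw [hpS]
  rw [hS]
  rw [map_sum]
  rw [Finset.sum_insert (by
    simp only [Finset.mem_insert, Finset.mem_singleton, not_or]
    exact ⟨hne _ _ _ _ (by norm_num), hne _ _ _ _ (by norm_num), hne _ _ _ _ (by norm_num),
      hne _ _ _ _ (by norm_num)⟩)]
  rw [Finset.sum_insert (by
    simp only [Finset.mem_insert, Finset.mem_singleton, not_or]
    exact ⟨hne _ _ _ _ (by norm_num), hne _ _ _ _ (by norm_num), hne _ _ _ _ (by norm_num)⟩)]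
  rw [Finset.sum_insert (by
    simp only [Finset.mem_insert, Finset.mem_singleton, not_or]
    exact ⟨hne _ _ _ _ (by norm_num), hne _ _ _ _ (by norm_num)⟩)]
  rw [Finset.sum_insert (by
    simp only [Finset.mem_singleton]
    exact hne _ _ _ _ (by norm_num))]
  rw [Finset.sum_singleton]
  rw [hevalmk, hevalmk, hevalmk, hevalmk, hevalmk]
  ring

end Aux

/-- Every positive definite binary quartic is equivalent to `f_λ` for a unique
`λ ∈ (−1/3, 1/3]` under an invertible linear change of variables. -/
theorem pd_quartic_equiv_fQuartic (p : MvPolynomial (Fin 2) ℝ)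
    (hp : p.IsHomogeneous 4)
    (hpd : ∀ u : Fin 2 → ℝ, u ≠ 0 → 0 < eval u p) :
    ∃ l ∈ Set.Ioc (-(1 / 3) : ℝ) (1 / 3), ∃ M : Matrix (Fin 2) (Fin 2) ℝ,
      IsUnit M ∧ p = compMat (fQuartic l) M := by
  classical
  obtain ⟨a, b, c, d, e, hrepr⟩ := homog_repr p hp
  have hpdf : ∀ x y : ℝ, ¬(x = 0 ∧ y = 0) →
      0 < a*x^4 + b*x^3*y + c*x^2*y^2 + d*x*y^3 + e*y^4 := by
    intro x y hxy
    have hne : (![x, y] : Fin 2 → ℝ) ≠ 0 := by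
      intro h0
      exact hxy ⟨congrFun h0 0, congrFun h0 1⟩
    have := hpd ![x, y] hne
    rw [hrepr ![x, y]] at this
    simpa using this
  obtain ⟨l, hlmem, m00, m01, m10, m11, hdet, hid⟩ :=
    core (fun x y => a*x^4 + b*x^3*y + c*x^2*y^2 + d*x*y^3 + e*y^4) a b c d e
      (fun x y => rfl) hpdf
  refine ⟨l, by simpa using hlmem, !![m00, m01; m10, m11], ?_, ?_⟩
  · rw [Matrix.isUnit_iff_isUnit_det]
    rw [Matrix.det_fin_two_of]
    exact isUnit_iff_ne_zero.mpr hdet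
  · apply MvPolynomial.funext
    intro u
    rw [hrepr u]
    have h1 : eval u (compMat (fQuartic l) (!![m00, m01; m10, m11]))
        = eval (fun j => ∑ k, (!![m00, m01; m10, m11]) j k * u k) (fQuartic l) :=
      eval_compMat' _ _ _
    rw [h1]
    have h2 : eval (fun j => ∑ k, (!![m00, m01; m10, m11]) j k * u k) (fQuartic l)
        = (m00*u 0 + m01*u 1)^4 + 6*l*(m00*u 0 + m01*u 1)^2*(m10*u 0 + m11*u 1)^2
          + (m10*u 0 + m11*u 1)^4 := by
      simp [fQuartic, Fin.sum_univ_two]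
      try ring
    rw [h2]
    have := hid (u 0) (u 1)
    simpa using this
end

section
/- Let r, s ∈ [−1/3, 0] and set U(r) = −(1+3r)/(3−3r). If s ≥ U(r), then [f_r∘M₁, f_s∘M₂] ≥ 0 for all 2×2 real matrices M₁, M₂. If s < U(r), then there exist 2×2 real matrices M₁, M₂ with [f_r∘M₁, f_s∘M₂] < 0. -/
open MvPolynomial Filter

noncomputable def ee (i j : ℕ) : Fin 2 →₀ ℕ := Finsupp.single 0 i + Finsupp.single 1 j

noncomputable def qform (p0 p1 p2 p3 p4 : ℝ) : MvPolynomial (Fin 2) ℝ :=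
  monomial (ee 4 0) p0 + monomial (ee 3 1) p1 + monomial (ee 2 2) p2 +
  monomial (ee 1 3) p3 + monomial (ee 0 4) p4

lemma mono_eq (i j : ℕ) (p : ℝ) :
    (monomial (ee i j) p : MvPolynomial (Fin 2) ℝ) = C p * X 0 ^ i * X 1 ^ j := by
  rw [ee, X_pow_eq_monomial, X_pow_eq_monomial, C_apply, monomial_mul, monomial_mul]
  simp

lemma compMat_fQuartic (l : ℝ) (M : Matrix (Fin 2) (Fin 2) ℝ) :
    compMat (fQuartic l) M =
      qform (M 0 0^4 + 6*l*(M 0 0)^2*(M 1 0)^2 + (M 1 0)^4)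
            (4*(M 0 0)^3*(M 0 1) + 6*l*(2*(M 0 0)^2*(M 1 0)*(M 1 1) + 2*(M 0 0)*(M 0 1)*(M 1 0)^2) + 4*(M 1 0)^3*(M 1 1))
            (6*(M 0 0)^2*(M 0 1)^2 + 6*l*((M 0 0)^2*(M 1 1)^2 + 4*(M 0 0)*(M 0 1)*(M 1 0)*(M 1 1) + (M 0 1)^2*(M 1 0)^2) + 6*(M 1 0)^2*(M 1 1)^2)
            (4*(M 0 0)*(M 0 1)^3 + 6*l*(2*(M 0 1)^2*(M 1 0)*(M 1 1) + 2*(M 0 0)*(M 0 1)*(M 1 1)^2) + 4*(M 1 0)*(M 1 1)^3)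
            ((M 0 1)^4 + 6*l*(M 0 1)^2*(M 1 1)^2 + (M 1 1)^4) := by
  simp only [qform, mono_eq, compMat, fQuartic, map_add, map_mul, map_pow, aeval_X, aeval_C,
    algebraMap_eq, Fin.sum_univ_two, map_ofNat]
  ring

lemma ee_apply0 (i j : ℕ) : ee i j 0 = i := by simp [ee, Finsupp.single_apply]
lemma ee_apply1 (i j : ℕ) : ee i j 1 = j := by simp [ee, Finsupp.single_apply]

lemma ee_eq_iff (i j i' j' : ℕ) : ee i j = ee i' j' ↔ i = i' ∧ j = j' := by
  constructor
  · intro h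
    exact ⟨by rw [← ee_apply0 i j, h, ee_apply0], by rw [← ee_apply1 i j, h, ee_apply1]⟩
  · rintro ⟨rfl, rfl⟩; rfl

lemma qform_support (p0 p1 p2 p3 p4 : ℝ) :
    (qform p0 p1 p2 p3 p4).support ⊆ ({ee 4 0, ee 3 1, ee 2 2, ee 1 3, ee 0 4} : Finset (Fin 2 →₀ ℕ)) := by
  intro m hm
  by_contra hmT
  simp only [Finset.mem_insert, Finset.mem_singleton, not_or] at hmT
  obtain ⟨h0, h1, h2, h3, h4⟩ := hmT
  refine mem_support_iff.mp hm ?_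
  simp only [qform, coeff_add, coeff_monomial, if_neg (fun h => h0 (Eq.symm h)),
    if_neg (fun h => h1 (Eq.symm h)), if_neg (fun h => h2 (Eq.symm h)), if_neg (fun h => h3 (Eq.symm h)),
    if_neg (fun h => h4 (Eq.symm h)), add_zero]

lemma mult_ee (i j : ℕ) :
    Nat.multinomial (Finset.univ : Finset (Fin 2)) (fun k => ee i j k) =
      Nat.multinomial Finset.univ (fun k : Fin 2 => if k = 0 then i else j) := by
  congr 1; funext k; fin_cases k <;> simp [ee, Finsupp.single_apply]

lemma formInner_qform (p0 p1 p2 p3 p4 q0 q1 q2 q3 q4 : ℝ) :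
    formInner (qform p0 p1 p2 p3 p4) (qform q0 q1 q2 q3 q4) =
      p0*q0 + p1*q1/4 + p2*q2/6 + p3*q3/4 + p4*q4 := by
  have hsub : (qform p0 p1 p2 p3 p4).support ∪ (qform q0 q1 q2 q3 q4).support ⊆
      ({ee 4 0, ee 3 1, ee 2 2, ee 1 3, ee 0 4} : Finset (Fin 2 →₀ ℕ)) :=
    Finset.union_subset (qform_support _ _ _ _ _) (qform_support _ _ _ _ _)
  have hz : ∀ m ∈ ({ee 4 0, ee 3 1, ee 2 2, ee 1 3, ee 0 4} : Finset (Fin 2 →₀ ℕ)),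
      m ∉ (qform p0 p1 p2 p3 p4).support ∪ (qform q0 q1 q2 q3 q4).support →
      coeff m (qform p0 p1 p2 p3 p4) * coeff m (qform q0 q1 q2 q3 q4) /
        (Nat.multinomial Finset.univ (fun j => m j) : ℝ) = 0 := by
    intro m _ hmU
    simp only [Finset.mem_union, not_or] at hmU
    rw [notMem_support_iff.mp hmU.1, zero_mul, zero_div]
  rw [formInner, Finset.sum_subset hsub hz]
  have ne1 : ee 4 0 ≠ ee 3 1 := by simp [ee_eq_iff]
  have ne2 : ee 4 0 ≠ ee 2 2 := by simp [ee_eq_iff]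
  have ne3 : ee 4 0 ≠ ee 1 3 := by simp [ee_eq_iff]
  have ne4 : ee 4 0 ≠ ee 0 4 := by simp [ee_eq_iff]
  have ne5 : ee 3 1 ≠ ee 2 2 := by simp [ee_eq_iff]
  have ne6 : ee 3 1 ≠ ee 1 3 := by simp [ee_eq_iff]
  have ne7 : ee 3 1 ≠ ee 0 4 := by simp [ee_eq_iff]
  have ne8 : ee 2 2 ≠ ee 1 3 := by simp [ee_eq_iff]
  have ne9 : ee 2 2 ≠ ee 0 4 := by simp [ee_eq_iff]
  have ne10 : ee 1 3 ≠ ee 0 4 := by simp [ee_eq_iff]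
  rw [Finset.sum_insert (by simp [ne1, ne2, ne3, ne4]),
    Finset.sum_insert (by simp [ne5, ne6, ne7]),
    Finset.sum_insert (by simp [ne8, ne9]),
    Finset.sum_insert (by simp [ne10]), Finset.sum_singleton]
  have m0 : Nat.multinomial (Finset.univ : Finset (Fin 2)) (fun k => ee 4 0 k) = 1 := by
    rw [mult_ee]; decide
  have m1 : Nat.multinomial (Finset.univ : Finset (Fin 2)) (fun k => ee 3 1 k) = 4 := by
    rw [mult_ee]; decide
  have m2 : Nat.multinomial (Finset.univ : Finset (Fin 2)) (fun k => ee 2 2 k) = 6 := by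
    rw [mult_ee]; decide
  have m3 : Nat.multinomial (Finset.univ : Finset (Fin 2)) (fun k => ee 1 3 k) = 4 := by
    rw [mult_ee]; decide
  have m4 : Nat.multinomial (Finset.univ : Finset (Fin 2)) (fun k => ee 0 4 k) = 1 := by
    rw [mult_ee]; decide
  simp only [qform, coeff_add, coeff_monomial, if_pos rfl, if_neg ne1, if_neg ne2, if_neg ne3,
    if_neg ne4, if_neg ne5, if_neg ne6, if_neg ne7, if_neg ne8, if_neg ne9, if_neg ne10,
    if_neg (Ne.symm ne1), if_neg (Ne.symm ne2), if_neg (Ne.symm ne3), if_neg (Ne.symm ne4),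
    if_neg (Ne.symm ne5), if_neg (Ne.symm ne6), if_neg (Ne.symm ne7), if_neg (Ne.symm ne8),
    if_neg (Ne.symm ne9), if_neg (Ne.symm ne10), add_zero, zero_add, m0, m1, m2, m3, m4]
  norm_num
  ring

lemma keyIneq (r s a b c d : ℝ) (hr1 : -(1/3) ≤ r) (hr2 : r ≤ 0) (hs1 : -(1/3) ≤ s) (hs2 : s ≤ 0)
    (h : 0 ≤ 1 + 3*r + 3*s - 3*(r*s)) :
    0 ≤ a^4 + 6*r*a^2*c^2 + c^4 + b^4 + 6*r*b^2*d^2 + d^4 + 6*s*(a^2*b^2 + c^2*d^2)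
      + 6*(r*s)*(a^2*d^2 + b^2*c^2 + 4*(a*b*c*d)) := by
  have hrs : 0 ≤ r*s := by nlinarith [mul_nonneg (neg_nonneg.2 hr2) (neg_nonneg.2 hs2)]
  have l2 : 0 ≤ 1 + 3*r - 3*s + 3*(r*s) := by
    have := mul_nonneg (neg_nonneg.2 hs2) (show (0:ℝ) ≤ 1 - r by linarith)
    nlinarith
  have l3 : 0 ≤ 1 + 3*s - 3*r + 3*(r*s) := by
    have := mul_nonneg (neg_nonneg.2 hr2) (show (0:ℝ) ≤ 1 - s by linarith)
    nlinarith
  have l4 : 0 ≤ 1 - 3*r - 3*s - 3*(r*s) := by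
    have := mul_nonneg (neg_nonneg.2 hs2) (show (0:ℝ) ≤ 1 + r by linarith)
    nlinarith
  nlinarith [mul_nonneg hrs (sq_nonneg (a*d + b*c)),
    mul_nonneg h (sq_nonneg (a^2 + b^2 + c^2 + d^2)),
    mul_nonneg l2 (sq_nonneg (a^2 - b^2 + c^2 - d^2)),
    mul_nonneg l3 (sq_nonneg (a^2 + b^2 - c^2 - d^2)),
    mul_nonneg l4 (sq_nonneg (a^2 - b^2 - c^2 + d^2))]

/-- For `r, s ∈ [−1/3, 0]` and `U(r) = −(1+3r)/(3−3r)`: if `s ≥ U(r)` then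
`[f_r∘M₁, f_s∘M₂] ≥ 0` for all matrices `M₁, M₂`; if `s < U(r)` there are matrices
making the pairing negative. -/
theorem fQuartic_orbit_pairing (r s : ℝ)
    (hrI : r ∈ Set.Icc (-(1 / 3) : ℝ) 0) (hsI : s ∈ Set.Icc (-(1 / 3) : ℝ) 0) :
    (-(1 + 3 * r) / (3 - 3 * r) ≤ s →
      ∀ M₁ M₂ : Matrix (Fin 2) (Fin 2) ℝ,
        0 ≤ formInner (compMat (fQuartic r) M₁) (compMat (fQuartic s) M₂)) ∧
    (s < -(1 + 3 * r) / (3 - 3 * r) →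
      ∃ M₁ M₂ : Matrix (Fin 2) (Fin 2) ℝ,
        formInner (compMat (fQuartic r) M₁) (compMat (fQuartic s) M₂) < 0) := by
  obtain ⟨hr1, hr2⟩ := hrI
  obtain ⟨hs1, hs2⟩ := hsI
  have h3r : (0:ℝ) < 3 - 3*r := by linarith
  constructor
  · intro hU M₁ M₂
    have h' : -(1 + 3*r) ≤ s * (3 - 3*r) := (div_le_iff₀ h3r).mp hU
    have hc : 0 ≤ 1 + 3*r + 3*s - 3*(r*s) := by nlinarith
    rw [compMat_fQuartic, compMat_fQuartic, formInner_qform]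
    refine le_of_le_of_eq (keyIneq r s
      (M₁ 0 0 * M₂ 0 0 + M₁ 0 1 * M₂ 0 1)
      (M₁ 0 0 * M₂ 1 0 + M₁ 0 1 * M₂ 1 1)
      (M₁ 1 0 * M₂ 0 0 + M₁ 1 1 * M₂ 0 1)
      (M₁ 1 0 * M₂ 1 0 + M₁ 1 1 * M₂ 1 1) hr1 hr2 hs1 hs2 hc) ?_
    ring
  · intro hU
    refine ⟨!![1, 1; -1, 1], !![1, 0; 0, 1], ?_⟩
    have h' : s * (3 - 3*r) < -(1 + 3*r) := (lt_div_iff₀ h3r).mp hU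
    rw [compMat_fQuartic, compMat_fQuartic, formInner_qform]
    norm_num [Matrix.cons_val_zero, Matrix.cons_val_one, Matrix.head_cons]
    nlinarith
end

section
/- K_{2,4} = Q_{2,4}: a binary quartic form p ∈ F_{2,4} is a convex function on ℝ² if and only if p is a finite sum of fourth powers of real linear forms, i.e., p(x,y) = Σ_{k=1}^s (a_k x + b_k y)⁴ for some s ∈ ℕ and a_k, b_k ∈ ℝ. -/
open MvPolynomial Finsupp

/-! ### Scalar helper lemmas -/

lemma quad_disc {α β γ : ℝ} (h : ∀ r s : ℝ, 0 ≤ α*r^2 + 2*β*r*s + γ*s^2) : β^2 ≤ α*γ := by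
  have hα : 0 ≤ α := by have := h 1 0; linarith
  rcases eq_or_lt_of_le hα with hα0 | hα0
  · have hβ : β = 0 := by
      by_contra hβ
      have h2 : ∀ r : ℝ, 0 ≤ 2*β*r + γ := by
        intro r; have := h r 1; nlinarith
      have h3 := h2 ((-(γ+1))/(2*β))
      have he : 2*β*((-(γ+1))/(2*β)) = -(γ+1) := by field_simp
      rw [he] at h3
      linarith
    have hγ : 0 ≤ γ := by have := h 0 1; linarith
    nlinarith
  · have := h (-β) α
    nlinarith

lemma sq_zero {x : ℝ} (h : x^2 ≤ 0) : x = 0 :=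
  pow_eq_zero_iff two_ne_zero |>.mp (le_antisymm h (sq_nonneg x))

lemma sq_pos_ne {B : ℝ} (hB : B ≠ 0) : 0 < B^2 :=
  lt_of_le_of_ne (sq_nonneg B) (fun h => hB (sq_zero (le_of_eq h.symm)))

lemma lin_dom {B A : ℝ} (h : ∀ l : ℝ, 0 ≤ 2*B*l + A*l^2) : B = 0 := by
  by_contra hB
  have hB2 : 0 < B^2 := sq_pos_ne hB
  rcases le_or_gt A 0 with hA | hA
  · have := h (-B)
    nlinarith [mul_nonpos_of_nonpos_of_nonneg hA (sq_nonneg B)]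
  · have hA' : A ≠ 0 := ne_of_gt hA
    have he : 2*B*(-B/A) + A*(-B/A)^2 = -(B^2/A) := by field_simp; ring
    have := h (-B/A)
    rw [he] at this
    nlinarith [div_pos hB2 hA]

lemma fourth_root {A : ℝ} (h : 0 ≤ A) : ∃ t : ℝ, t^4 = A := by
  refine ⟨Real.sqrt (Real.sqrt A), ?_⟩
  rw [show (4:ℕ) = 2*2 from rfl, pow_mul, Real.sq_sqrt (Real.sqrt_nonneg A), Real.sq_sqrt h]

lemma scale_pos {Φ Ψ : ℝ} (h : ∀ ε : ℝ, 0 ≤ Φ*ε^2 + Ψ*ε^4) : 0 ≤ Φ := by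
  by_contra hΦ
  push_neg at hΦ
  have hΦ2 : 0 < Φ^2 := sq_pos_ne (ne_of_lt hΦ)
  rcases le_or_gt Ψ 0 with hΨ | hΨ
  · have := h 1; linarith
  · have harg : 0 ≤ -Φ/(2*Ψ) := div_nonneg (by linarith) (by linarith)
    set ε := Real.sqrt (-Φ/(2*Ψ)) with hε
    have hε2 : ε^2 = -Φ/(2*Ψ) := Real.sq_sqrt harg
    have := h ε
    rw [show ε^4 = (ε^2)^2 by ring, hε2] at this
    have h2 : Φ*(-Φ/(2*Ψ)) + Ψ*(-Φ/(2*Ψ))^2 = -(Φ^2/(4*Ψ)) := by field_simp; ring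
    rw [h2] at this
    nlinarith [div_pos hΦ2 (by positivity : (0:ℝ) < 4*Ψ)]

/-! ### Moment decomposition -/

def Mom (a0 a1 a2 a3 a4 : ℝ) : Prop := ∃ c d : Fin 3 → ℝ,
  a0 = ∑ i, (c i)^4 ∧ a1 = ∑ i, (c i)^3 * d i ∧ a2 = ∑ i, (c i)^2 * (d i)^2 ∧
  a3 = ∑ i, (c i) * (d i)^3 ∧ a4 = ∑ i, (d i)^4

lemma mom_intro {a0 a1 a2 a3 a4 : ℝ} (c1 c2 c3 d1 d2 d3 : ℝ)
    (h0 : a0 = c1^4 + c2^4 + c3^4) (h1 : a1 = c1^3*d1 + c2^3*d2 + c3^3*d3)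
    (h2 : a2 = c1^2*d1^2 + c2^2*d2^2 + c3^2*d3^2)
    (h3 : a3 = c1*d1^3 + c2*d2^3 + c3*d3^3) (h4 : a4 = d1^4 + d2^4 + d3^4) :
    Mom a0 a1 a2 a3 a4 := by
  exact ⟨![c1,c2,c3], ![d1,d2,d3], by simpa [Fin.sum_univ_three] using h0,
    by simpa [Fin.sum_univ_three] using h1, by simpa [Fin.sum_univ_three] using h2,
    by simpa [Fin.sum_univ_three] using h3, by simpa [Fin.sum_univ_three] using h4⟩

set_option maxHeartbeats 2000000 in
lemma decomp_main (a0 a1 a2 a3 a4 : ℝ)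
    (hQ : ∀ r s t : ℝ, 0 ≤ a0*r^2 + 2*a1*r*s + a2*(s^2+2*r*t) + 2*a3*s*t + a4*t^2)
    (hM : 0 < a2*a4 - a3^2) :
    Mom a0 a1 a2 a3 a4 := by
  obtain ⟨k0, hk0⟩ : ∃ x : ℝ, x = a2*a4 - a3^2 := ⟨_, rfl⟩
  obtain ⟨k1, hk1⟩ : ∃ x : ℝ, x = a2*a3 - a1*a4 := ⟨_, rfl⟩
  obtain ⟨k2, hk2⟩ : ∃ x : ℝ, x = a1*a3 - a2^2 := ⟨_, rfl⟩
  obtain ⟨D, hD⟩ : ∃ x : ℝ, x = a0*k0 + a1*k1 + a2*k2 := ⟨_, rfl⟩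
  rw [← hk0] at hM
  have hkne : k0 ≠ 0 := ne_of_gt hM
  have row2 : k0*a1 + k1*a2 + k2*a3 = 0 := by rw [hk0, hk1, hk2]; ring
  have row3 : k0*a2 + k1*a3 + k2*a4 = 0 := by rw [hk0, hk1, hk2]; ring
  have hDk : 0 ≤ k0 * D := by
    have h := hQ k0 k1 k2
    have he : a0*k0^2 + 2*a1*k0*k1 + a2*(k1^2+2*k0*k2) + 2*a3*k1*k2 + a4*k2^2 = k0*D := by
      linear_combination k1*row2 + k2*row3 - k0*hD
    rw [he] at h
    exact h
  have hD0 : 0 ≤ D := nonneg_of_mul_nonneg_right hDk hM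
  obtain ⟨l, hl⟩ : ∃ x : ℝ, x = D / k0 := ⟨_, rfl⟩
  have hl0 : 0 ≤ l := hl ▸ div_nonneg hD0 (le_of_lt hM)
  obtain ⟨b0, hb0⟩ : ∃ x : ℝ, x = a0 - l := ⟨_, rfl⟩
  have ha0 : a0 = l + b0 := by rw [hb0]; ring
  have hQ' : ∀ r s t : ℝ, 0 ≤ b0*r^2 + 2*a1*r*s + a2*(s^2+2*r*t) + 2*a3*s*t + a4*t^2 := by
    intro r s t
    have h := hQ 0 (s - r*k1/k0) (t - r*k2/k0)
    have he : a0*(0:ℝ)^2 + 2*a1*0*(s - r*k1/k0) +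
        a2*((s - r*k1/k0)^2+2*0*(t - r*k2/k0)) +
        2*a3*(s - r*k1/k0)*(t - r*k2/k0) + a4*(t - r*k2/k0)^2
        = b0*r^2 + 2*a1*r*s + a2*(s^2+2*r*t) + 2*a3*s*t + a4*t^2 := by
      have h2ne : (a2*a4 - a3^2) ≠ 0 := hk0 ▸ hkne
      rw [hb0, hl, hD, hk0, hk1, hk2]
      field_simp
      ring
    rw [he] at h
    exact h
  have row1 : k0*b0 + k1*a1 + k2*a2 = 0 := by
    rw [hb0, hl]
    field_simp
    linear_combination -hD
  have hb0n : 0 ≤ b0 := by have := hQ' 1 0 0; linarith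
  have ha2n : 0 ≤ a2 := by have := hQ' 0 1 0; linarith
  have ha4n : 0 ≤ a4 := by have := hQ' 0 0 1; linarith
  have m01 : a1^2 ≤ b0*a2 := quad_disc (fun r s => by have := hQ' r s 0; nlinarith [this])
  rcases lt_or_ge (k1^2 - 4*k0*k2) 0 with hd | hd
  · -- PD kernel: everything vanishes
    have hk2pos : 0 < k2 := by nlinarith [sq_nonneg k1]
    have hq0 : k0*a1^2 + k1*a1*a2 + k2*a2^2 ≤ 0 := by nlinarith [row1]
    have ha2 : a2 = 0 := sq_zero (by nlinarith [sq_nonneg (2*k0*a1 + k1*a2)])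
    have ha1 : a1 = 0 := sq_zero (by nlinarith [sq_nonneg (2*k0*a1 + k1*a2), hq0, ha2])
    have hb00 : b0 = 0 := by
      have h : k0*b0 = 0 := by rw [ha1, ha2] at row1; linarith [row1]
      exact (mul_eq_zero.mp h).resolve_left hkne
    have ha3 : a3 = 0 := by
      have h : k2*a3 = 0 := by rw [ha1, ha2] at row2; linarith [row2]
      exact (mul_eq_zero.mp h).resolve_left (ne_of_gt hk2pos)
    have ha4 : a4 = 0 := by
      have h : k2*a4 = 0 := by rw [ha2, ha3] at row3; linarith [row3]
      exact (mul_eq_zero.mp h).resolve_left (ne_of_gt hk2pos)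
    obtain ⟨e, he⟩ := fourth_root hl0
    exact mom_intro e 0 0 0 0 0 (by rw [ha0, hb00, ← he]; ring) (by rw [ha1]; ring)
      (by rw [ha2]; ring) (by rw [ha3]; ring) (by rw [ha4]; ring)
  · -- hd : 0 ≤ k1^2 - 4*k0*k2
    by_cases hk2z : k2 = 0
    · by_cases hk1z : k1 = 0
      · exfalso
        have ha2 : a2 = 0 := by
          have h : k0*a2 = 0 := by rw [hk1z, hk2z] at row3; linarith [row3]
          exact (mul_eq_zero.mp h).resolve_left hkne
        rw [hk0, ha2] at hM
        nlinarith [sq_nonneg a3]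
      · obtain ⟨r, hrdef⟩ : ∃ x : ℝ, x = -k0/k1 := ⟨_, rfl⟩
        have hk0r : k0 = -k1*r := by rw [hrdef]; field_simp
        rw [hk2z] at row1 row2 row3
        have ha1 : a1 = r*b0 := by
          apply mul_left_cancel₀ hk1z
          rw [hk0r] at row1
          linear_combination row1
        have ha2 : a2 = r^2*b0 := by
          apply mul_left_cancel₀ hk1z
          rw [hk0r, ha1] at row2
          linear_combination row2
        have ha3 : a3 = r^3*b0 := by
          apply mul_left_cancel₀ hk1z
          rw [hk0r, ha2] at row3
          linear_combination row3
        have hc4 : 0 ≤ a4 - r^4*b0 := by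
          have h := hQ' (r^2) (-2*r) 1
          have he : b0*(r^2)^2 + 2*a1*(r^2)*(-2*r) + a2*((-2*r)^2+2*(r^2)*1) +
              2*a3*(-2*r)*1 + a4*1^2 = a4 - r^4*b0 := by
            rw [ha1, ha2, ha3]; ring
          rw [he] at h
          exact h
        obtain ⟨e, he⟩ := fourth_root hl0
        obtain ⟨t1, ht1⟩ := fourth_root hb0n
        obtain ⟨u, hu⟩ := fourth_root hc4
        refine mom_intro e t1 0 0 (t1*r) u ?_ ?_ ?_ ?_ ?_
        · rw [ha0, ← he, ← ht1]; ring
        · rw [ha1, ← ht1]; ring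
        · rw [ha2, ← ht1]; ring
        · rw [ha3, ← ht1]; ring
        · rw [show a4 = (a4 - r^4*b0) + r^4*b0 by ring, ← hu, ← ht1]; ring
    · have h4k2 : (4:ℝ)*k2 ≠ 0 := by
        simp only [ne_eq, mul_eq_zero]
        push_neg
        exact ⟨by norm_num, hk2z⟩
      obtain ⟨δ, hδdef⟩ : ∃ x : ℝ, x = Real.sqrt (k1^2 - 4*k0*k2) := ⟨_, rfl⟩
      have hδ2 : δ^2 = k1^2 - 4*k0*k2 := by rw [hδdef]; exact Real.sq_sqrt hd
      have hδnn : 0 ≤ δ := hδdef ▸ Real.sqrt_nonneg _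
      by_cases hδz : δ = 0
      · -- repeated root
        have hd0 : k1^2 = 4*k0*k2 := by rw [hδz] at hδ2; linarith [hδ2]
        have hk2pos : 0 < k2 := by
          rcases lt_trichotomy k2 0 with h | h | h
          · nlinarith [sq_nonneg k1]
          · exact absurd h hk2z
          · exact h
        obtain ⟨r, hrdef⟩ : ∃ x : ℝ, x = -k1/(2*k2) := ⟨_, rfl⟩
        have key1 : k1 = -2*k2*r := by rw [hrdef]; field_simp
        have key0 : k0 = k2*r^2 := by
          apply mul_left_cancel₀ h4k2
          linear_combination -hd0 + (k1 - 2*k2*r)*key1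
        have ha2rel : a2 = 2*r*a1 - r^2*b0 := by
          apply mul_left_cancel₀ hk2z
          rw [key0, key1] at row1
          linear_combination row1
        have ha1 : a1 = r*b0 := by
          have h : (a1 - r*b0)^2 ≤ 0 := by nlinarith [m01, ha2rel]
          have h2 := sq_zero h
          linarith [h2]
        have ha2 : a2 = r^2*b0 := by rw [ha2rel, ha1]; ring
        have ha3 : a3 = r^3*b0 := by
          apply mul_left_cancel₀ hk2z
          rw [key0, key1, ha1, ha2] at row2
          linear_combination row2
        have ha4 : a4 = r^4*b0 := by
          apply mul_left_cancel₀ hk2z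
          rw [key0, key1, ha2, ha3] at row3
          linear_combination row3
        obtain ⟨e, he⟩ := fourth_root hl0
        obtain ⟨t1, ht1⟩ := fourth_root hb0n
        refine mom_intro e t1 0 0 (t1*r) 0 ?_ ?_ ?_ ?_ ?_
        · rw [ha0, ← he, ← ht1]; ring
        · rw [ha1, ← ht1]; ring
        · rw [ha2, ← ht1]; ring
        · rw [ha3, ← ht1]; ring
        · rw [ha4, ← ht1]; ring
      · -- two distinct roots
        obtain ⟨r1, hr1def⟩ : ∃ x : ℝ, x = (-k1 + δ)/(2*k2) := ⟨_, rfl⟩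
        obtain ⟨r2, hr2def⟩ : ∃ x : ℝ, x = (-k1 - δ)/(2*k2) := ⟨_, rfl⟩
        have h21 : 2*k2*r1 = -k1 + δ := by
          rw [hr1def]; field_simp
        have h22 : 2*k2*r2 = -k1 - δ := by
          rw [hr2def]; field_simp
        have hr1 : k2*r1^2 + k1*r1 + k0 = 0 := by
          apply mul_left_cancel₀ h4k2
          linear_combination (2*k2*r1 + k1 + δ)*h21 + hδ2
        have hr2 : k2*r2^2 + k1*r2 + k0 = 0 := by
          apply mul_left_cancel₀ h4k2
          linear_combination (2*k2*r2 + k1 - δ)*h22 + hδ2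
        have hrne : r1 - r2 ≠ 0 := by
          have h : k2*(r1 - r2) = δ := by linear_combination (1/2 : ℝ)*h21 - (1/2 : ℝ)*h22
          intro hc
          rw [hc, mul_zero] at h
          exact hδz h.symm
        obtain ⟨A, hA⟩ : ∃ x : ℝ, x = (a1 - b0*r2)/(r1 - r2) := ⟨_, rfl⟩
        obtain ⟨B, hB⟩ : ∃ x : ℝ, x = (b0*r1 - a1)/(r1 - r2) := ⟨_, rfl⟩
        have e0 : b0 = A + B := by rw [hA, hB]; field_simp; ring
        have e1 : a1 = A*r1 + B*r2 := by
          rw [hA, hB]; field_simp; ring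
        have e2 : a2 = A*r1^2 + B*r2^2 := by
          apply mul_left_cancel₀ hk2z
          linear_combination row1 - A*hr1 - B*hr2 - k0*e0 - k1*e1
        have e3 : a3 = A*r1^3 + B*r2^3 := by
          apply mul_left_cancel₀ hk2z
          linear_combination row2 - A*r1*hr1 - B*r2*hr2 - k0*e1 - k1*e2
        have e4 : a4 = A*r1^4 + B*r2^4 := by
          apply mul_left_cancel₀ hk2z
          linear_combination row3 - A*r1^2*hr1 - B*r2^2*hr2 - k0*e2 - k1*e3
        have hsqpos : 0 < (r1 - r2)^2 := sq_pos_ne hrne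
        have hApos : 0 ≤ A := by
          have h := hQ' r2 (-1) 0
          have he : b0*r2^2 + 2*a1*r2*(-1) + a2*((-1)^2+2*r2*0) + 2*a3*(-1)*0 + a4*0^2
              = (r1-r2)^2*A := by
            linear_combination r2^2*e0 - 2*r2*e1 + e2
          rw [he] at h
          exact nonneg_of_mul_nonneg_right h hsqpos
        have hBpos : 0 ≤ B := by
          have h := hQ' r1 (-1) 0
          have he : b0*r1^2 + 2*a1*r1*(-1) + a2*((-1)^2+2*r1*0) + 2*a3*(-1)*0 + a4*0^2
              = (r1-r2)^2*B := by
            linear_combination r1^2*e0 - 2*r1*e1 + e2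
          rw [he] at h
          exact nonneg_of_mul_nonneg_right h hsqpos
        obtain ⟨e, he⟩ := fourth_root hl0
        obtain ⟨tA, htA⟩ := fourth_root hApos
        obtain ⟨tB, htB⟩ := fourth_root hBpos
        refine mom_intro e tA tB 0 (tA*r1) (tB*r2) ?_ ?_ ?_ ?_ ?_
        · rw [ha0, e0, ← he, ← htA, ← htB]; ring
        · rw [e1, ← htA, ← htB]; ring
        · rw [e2, ← htA, ← htB]; ring
        · rw [e3, ← htA, ← htB]; ring
        · rw [e4, ← htA, ← htB]; ring

set_option maxHeartbeats 1000000 in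
lemma decomp (a0 a1 a2 a3 a4 : ℝ)
    (hQ : ∀ r s t : ℝ, 0 ≤ a0*r^2 + 2*a1*r*s + a2*(s^2+2*r*t) + 2*a3*s*t + a4*t^2) :
    Mom a0 a1 a2 a3 a4 := by
  have ha0n : 0 ≤ a0 := by have := hQ 1 0 0; linarith
  have ha2n : 0 ≤ a2 := by have := hQ 0 1 0; linarith
  have ha4n : 0 ≤ a4 := by have := hQ 0 0 1; linarith
  have m01 : a1^2 ≤ a0*a2 := quad_disc (fun r s => by have := hQ r s 0; nlinarith [this])
  have m12 : a3^2 ≤ a2*a4 := quad_disc (fun s t => by have := hQ 0 s t; nlinarith [this])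
  by_cases hM : 0 < a2*a4 - a3^2
  · exact decomp_main _ _ _ _ _ hQ hM
  by_cases hM2 : 0 < a2*a0 - a1^2
  · have hQrev : ∀ r s t : ℝ, 0 ≤ a4*r^2 + 2*a3*r*s + a2*(s^2+2*r*t) + 2*a1*s*t + a0*t^2 := by
      intro r s t
      have h := hQ t s r
      have he : a4*r^2 + 2*a3*r*s + a2*(s^2+2*r*t) + 2*a1*s*t + a0*t^2
          = a0*t^2 + 2*a1*t*s + a2*(s^2+2*t*r) + 2*a3*s*r + a4*r^2 := by ring
      rw [he]
      exact h
    obtain ⟨c, d, h0, h1, h2, h3, h4⟩ := decomp_main a4 a3 a2 a1 a0 hQrev hM2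
    refine ⟨d, c, h4, ?_, ?_, ?_, h0⟩
    · rw [h3]; apply Finset.sum_congr rfl; intros; ring
    · rw [h2]; apply Finset.sum_congr rfl; intros; ring
    · rw [h1]; apply Finset.sum_congr rfl; intros; ring
  · push_neg at hM hM2
    have e12 : a3^2 = a2*a4 := le_antisymm m12 (by linarith)
    have e01 : a1^2 = a0*a2 := le_antisymm (by nlinarith [m01]) (by linarith)
    by_cases ha2 : a2 = 0
    · have ha1 : a1 = 0 := sq_zero (by nlinarith [e01])
      have ha3 : a3 = 0 := sq_zero (by nlinarith [e12])
      obtain ⟨t0, ht0⟩ := fourth_root ha0n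
      obtain ⟨t4, ht4⟩ := fourth_root ha4n
      exact mom_intro t0 0 0 0 0 t4 (by rw [← ht0]; ring) (by rw [ha1]; ring)
        (by rw [ha2]; ring) (by rw [ha3]; ring) (by rw [← ht4]; ring)
    · have ha2pos : 0 < a2 := lt_of_le_of_ne ha2n (Ne.symm ha2)
      have ha0pos : 0 < a0 := by
        rcases lt_or_eq_of_le ha0n with h | h
        · exact h
        · exfalso
          have ha00 : a0 = 0 := h.symm
          have h2 := hQ (-(a4+1)/(2*a2)) 0 1
          have he : a0*(-(a4+1)/(2*a2))^2 + 2*a1*(-(a4+1)/(2*a2))*0 +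
              a2*(0^2+2*(-(a4+1)/(2*a2))*1) + 2*a3*0*1 + a4*1^2 = a0*(-(a4+1)/(2*a2))^2 - 1 := by
            field_simp
            ring
          rw [he, ha00] at h2
          simp at h2
          linarith
      have hBzero : a1*a2 - a0*a3 = 0 := by
        apply lin_dom (A := a4)
        intro lam
        have h := hQ a1 (-a0) lam
        have he : a0*a1^2 + 2*a1*a1*(-a0) + a2*((-a0)^2+2*a1*lam) + 2*a3*(-a0)*lam + a4*lam^2
            = 2*(a1*a2 - a0*a3)*lam + a4*lam^2 := by linear_combination -a0*e01
        rw [he] at h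
        exact h
      obtain ⟨r, hrdef⟩ : ∃ x : ℝ, x = a1/a0 := ⟨_, rfl⟩
      have ha0ne : a0 ≠ 0 := ne_of_gt ha0pos
      have ha1 : a1 = r*a0 := by rw [hrdef]; field_simp
      have ha2e : a2 = r^2*a0 := by
        apply mul_left_cancel₀ ha0ne
        linear_combination -e01 + (a1 + r*a0)*ha1
      have ha3e : a3 = r^3*a0 := by
        apply mul_left_cancel₀ ha0ne
        linear_combination -hBzero + a2*ha1 + r*a0*ha2e
      have ha4e : a4 = r^4*a0 := by
        apply mul_left_cancel₀ (ne_of_gt ha2pos)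
        linear_combination -e12 + (a3 + r^3*a0)*ha3e - r^4*a0*ha2e
      obtain ⟨t0, ht0⟩ := fourth_root ha0n
      exact mom_intro t0 0 0 (t0*r) 0 0 (by rw [← ht0]; ring) (by rw [ha1, ← ht0]; ring)
        (by rw [ha2e, ← ht0]; ring) (by rw [ha3e, ← ht0]; ring) (by rw [ha4e, ← ht0]; ring)

set_option maxHeartbeats 1000000 in
lemma hess_to_psd (a0 a1 a2 a3 a4 : ℝ)
    (hC : ∀ x y u w : ℝ, 0 ≤ a0*(x*u)^2 + 2*a1*(x*u)*(y*u+x*w) +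
      a2*((y*u+x*w)^2+2*(x*u)*(y*w)) + 2*a3*(y*u+x*w)*(y*w) + a4*(y*w)^2) :
    ∀ r s t : ℝ, 0 ≤ a0*r^2 + 2*a1*r*s + a2*(s^2+2*r*t) + 2*a3*s*t + a4*t^2 := by
  have hC' : ∀ r s t : ℝ, 4*r*t ≤ s^2 → 0 ≤ a0*r^2 + 2*a1*r*s + a2*(s^2+2*r*t) + 2*a3*s*t + a4*t^2 := by
    intro r s t hrt
    by_cases hr : r = 0
    · have h := hC 0 1 s t
      have he : a0*((0:ℝ)*s)^2 + 2*a1*(0*s)*(1*s+0*t) + a2*((1*s+0*t)^2+2*(0*s)*(1*t)) +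
          2*a3*(1*s+0*t)*(1*t) + a4*(1*t)^2
          = a0*r^2 + 2*a1*r*s + a2*(s^2+2*r*t) + 2*a3*s*t + a4*t^2 := by
        rw [hr]; ring
      rw [he] at h
      exact h
    · obtain ⟨δ, hδdef⟩ : ∃ x : ℝ, x = Real.sqrt (s^2 - 4*r*t) := ⟨_, rfl⟩
      have hδ2 : δ^2 = s^2 - 4*r*t := by rw [hδdef]; exact Real.sq_sqrt (by linarith)
      obtain ⟨y, hy⟩ : ∃ x : ℝ, x = (s+δ)/(2*r) := ⟨_, rfl⟩
      obtain ⟨w, hw⟩ : ∃ x : ℝ, x = (s-δ)/2 := ⟨_, rfl⟩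
      have h1 : y*r + 1*w = s := by rw [hy, hw]; field_simp; ring
      have h2 : y*w = t := by
        rw [hy, hw]
        field_simp
        linear_combination -hδ2
      have h := hC 1 y r w
      rw [h1, h2] at h
      simpa using h
  intro r s t
  by_cases hin : 4*r*t ≤ s^2
  · exact hC' r s t hin
  · push_neg at hin
    have haux : ∀ r s t : ℝ, 0 < r → s^2 < 4*r*t →
        0 ≤ a0*r^2 + 2*a1*r*s + a2*(s^2+2*r*t) + 2*a3*s*t + a4*t^2 := by
      intro r s t hr hst
      have hrne : r ≠ 0 := ne_of_gt hr
      obtain ⟨τ, hτdef⟩ : ∃ x : ℝ, x = t - s^2/(4*r) := ⟨_, rfl⟩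
      have hτpos : 0 < τ := by
        rw [hτdef]
        rw [lt_sub_iff_add_lt, zero_add, div_lt_iff₀ (by positivity)]
        linarith [hst]
      obtain ⟨w, hwdef⟩ : ∃ x : ℝ, x = Real.sqrt (r*τ) := ⟨_, rfl⟩
      have hw : w^2 = r*τ := by rw [hwdef]; exact Real.sq_sqrt (by positivity)
      have h1 := hC' r s (s^2/(4*r)) (le_of_eq (by field_simp))
      have h3 := hC' 0 0 τ (by norm_num)
      have h2 := hC' 0 w (s/(2*r)*w) (by nlinarith [sq_nonneg w])
      have he2 : a0*(0:ℝ)^2 + 2*a1*0*w + a2*(w^2+2*0*(s/(2*r)*w)) + 2*a3*w*(s/(2*r)*w) +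
          a4*(s/(2*r)*w)^2 = (a2 + a3*s/r + a4*s^2/(4*r^2))*(r*τ) := by
        rw [← hw]; field_simp; ring
      rw [he2] at h2
      have key : a0*r^2 + 2*a1*r*s + a2*(s^2+2*r*t) + 2*a3*s*t + a4*t^2
          = (a0*r^2 + 2*a1*r*s + a2*(s^2+2*r*(s^2/(4*r))) + 2*a3*s*(s^2/(4*r)) + a4*(s^2/(4*r))^2)
            + 2*((a2 + a3*s/r + a4*s^2/(4*r^2))*(r*τ))
            + (a0*0^2 + 2*a1*0*0 + a2*(0^2+2*0*τ) + 2*a3*0*τ + a4*τ^2) := by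
        rw [hτdef]
        field_simp
        ring
      rw [key]
      have h3' : 0 ≤ a0*(0:ℝ)^2 + 2*a1*0*0 + a2*(0^2+2*0*τ) + 2*a3*0*τ + a4*τ^2 := h3
      linarith [h1, h2, h3']
    rcases lt_trichotomy r 0 with hr | hr | hr
    · have h := haux (-r) (-s) (-t) (by linarith) (by nlinarith [hin])
      have he : a0*(-r)^2 + 2*a1*(-r)*(-s) + a2*((-s)^2+2*(-r)*(-t)) + 2*a3*(-s)*(-t) + a4*(-t)^2
          = a0*r^2 + 2*a1*r*s + a2*(s^2+2*r*t) + 2*a3*s*t + a4*t^2 := by ring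
      rw [he] at h
      exact h
    · exfalso; rw [hr] at hin; nlinarith [sq_nonneg s]
    · exact haux r s t hr hin

set_option maxHeartbeats 1000000 in
lemma conv_to_hess (a0 a1 a2 a3 a4 : ℝ)
    (hmid : ∀ x y u w : ℝ, 2*(a0*x^4 + 4*a1*x^3*y + 6*a2*x^2*y^2 + 4*a3*x*y^3 + a4*y^4) ≤
      (a0*(x+u)^4 + 4*a1*(x+u)^3*(y+w) + 6*a2*(x+u)^2*(y+w)^2 + 4*a3*(x+u)*(y+w)^3 + a4*(y+w)^4) +
      (a0*(x-u)^4 + 4*a1*(x-u)^3*(y-w) + 6*a2*(x-u)^2*(y-w)^2 + 4*a3*(x-u)*(y-w)^3 + a4*(y-w)^4)) :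
    ∀ x y u w : ℝ, 0 ≤ a0*(x*u)^2 + 2*a1*(x*u)*(y*u+x*w) +
      a2*((y*u+x*w)^2+2*(x*u)*(y*w)) + 2*a3*(y*u+x*w)*(y*w) + a4*(y*w)^2 := by
  intro x y u w
  have h : ∀ ε : ℝ, 0 ≤ (6*(a0*(x*u)^2 + 2*a1*(x*u)*(y*u+x*w) +
      a2*((y*u+x*w)^2+2*(x*u)*(y*w)) + 2*a3*(y*u+x*w)*(y*w) + a4*(y*w)^2))*ε^2 +
      (a0*u^4 + 4*a1*u^3*w + 6*a2*u^2*w^2 + 4*a3*u*w^3 + a4*w^4)*ε^4 := by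
    intro ε
    have h1 := hmid x y (ε*u) (ε*w)
    nlinarith [h1]
  have h2 := scale_pos h
  linarith

lemma convexOn_finset_sum {ι E : Type*} [AddCommGroup E] [Module ℝ E] (t : Finset ι)
    (g : ι → E → ℝ) (h : ∀ i ∈ t, ConvexOn ℝ Set.univ (g i)) :
    ConvexOn ℝ Set.univ (fun x => ∑ i ∈ t, g i x) := by
  induction t using Finset.cons_induction with
  | empty => simpa using convexOn_const 0 convex_univ
  | cons i t hit ih =>
    simp only [Finset.sum_cons]
    exact (h i (Finset.mem_cons_self i t)).add (ih fun j hj => h j (Finset.mem_cons_of_mem hj))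

lemma easy_dir (n : ℕ) (a b : Fin n → ℝ) :
    ConvexOn ℝ Set.univ (fun x : Fin 2 → ℝ => ∑ k, (a k * x 0 + b k * x 1)^4) := by
  apply convexOn_finset_sum
  intro k _
  have hpow : ConvexOn ℝ Set.univ (fun z : ℝ => z ^ 4) := Even.convexOn_pow ⟨2, rfl⟩
  let L : (Fin 2 → ℝ) →ₗ[ℝ] ℝ :=
    { toFun := fun x => a k * x 0 + b k * x 1
      map_add' := by intro x y; simp; ring
      map_smul' := by intro c x; simp; ring }
  have h := hpow.comp_linearMap L
  exact h

/-! ### Representation of homogeneous quartics -/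

lemma deg2 (m : Fin 2 →₀ ℕ) : m.degree = m 0 + m 1 := by
  rw [Finsupp.degree_apply, Finset.sum_subset (Finset.subset_univ m.support)
    (by intro x _ h; simpa using h), Fin.sum_univ_two]

noncomputable def mono (i : ℕ) : Fin 2 →₀ ℕ := Finsupp.single 0 (4 - i) + Finsupp.single 1 i

lemma mono1 (i : ℕ) : mono i 1 = i := by simp [mono]
lemma mono0 (i : ℕ) : mono i 0 = 4 - i := by simp [mono]

lemma repr4 (p : MvPolynomial (Fin 2) ℝ) (hp : p.IsHomogeneous 4) :
    p = ∑ i ∈ Finset.range 5, monomial (mono i) (coeff (mono i) p) := by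
  ext m
  rw [coeff_sum]
  by_cases hm : m.degree = 4
  · have hm1 : m 1 ≤ 4 := by have := deg2 m; omega
    have hmm : m = mono (m 1) := by
      ext i
      fin_cases i <;> simp [mono, deg2] at * <;> omega
    rw [Finset.sum_eq_single (m 1)]
    · rw [coeff_monomial, if_pos hmm.symm, ← hmm]
    · intro b _ hb
      rw [coeff_monomial, if_neg]
      intro h
      exact hb (by rw [← mono1 b, h])
    · intro h; exact absurd (Finset.mem_range.2 (by omega)) h
  · rw [hp.coeff_eq_zero hm]
    apply (Finset.sum_eq_zero _).symm
    intro i hi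
    rw [coeff_monomial, if_neg]
    intro h
    apply hm
    rw [← h, deg2, mono0, mono1]
    simp only [Finset.mem_range] at hi
    omega

lemma heval (p : MvPolynomial (Fin 2) ℝ) (hp : p.IsHomogeneous 4) (v : Fin 2 → ℝ) :
    eval v p = coeff (mono 0) p * (v 0)^4 + coeff (mono 1) p * (v 0)^3*(v 1) +
      coeff (mono 2) p * (v 0)^2*(v 1)^2 + coeff (mono 3) p * (v 0)*(v 1)^3 +
      coeff (mono 4) p * (v 1)^4 := by
  conv_lhs => rw [repr4 p hp]
  rw [map_sum]
  rw [Finset.sum_range_succ, Finset.sum_range_succ, Finset.sum_range_succ,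
    Finset.sum_range_succ, Finset.sum_range_one]
  simp [mono, eval_monomial, Finsupp.prod_add_index, Finsupp.prod_single_index]
  ring

/-! ### Main theorem -/

set_option maxHeartbeats 2000000 in
/-- `K_{2,4} = Q_{2,4}`: a binary quartic form is convex on `ℝ²` iff it is a finite sum
of fourth powers of real linear forms. -/
theorem convex_quartic_iff_sum_fourth_powers (p : MvPolynomial (Fin 2) ℝ)
    (hp : p.IsHomogeneous 4) :
    ConvexOn ℝ Set.univ (fun x : Fin 2 → ℝ => eval x p) ↔
      ∃ (s : ℕ) (a b : Fin s → ℝ),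
        p = ∑ k, (MvPolynomial.C (a k) * X 0 + MvPolynomial.C (b k) * X 1) ^ 4 := by
  constructor
  · intro hconv
    obtain ⟨M0, hM0⟩ : ∃ x : ℝ, x = coeff (mono 0) p := ⟨_, rfl⟩
    obtain ⟨M1, hM1⟩ : ∃ x : ℝ, x = coeff (mono 1) p := ⟨_, rfl⟩
    obtain ⟨M2, hM2⟩ : ∃ x : ℝ, x = coeff (mono 2) p := ⟨_, rfl⟩
    obtain ⟨M3, hM3⟩ : ∃ x : ℝ, x = coeff (mono 3) p := ⟨_, rfl⟩
    obtain ⟨M4, hM4⟩ : ∃ x : ℝ, x = coeff (mono 4) p := ⟨_, rfl⟩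
    have hev : ∀ v : Fin 2 → ℝ, eval v p = M0*(v 0)^4 + M1*(v 0)^3*(v 1) +
        M2*(v 0)^2*(v 1)^2 + M3*(v 0)*(v 1)^3 + M4*(v 1)^4 := by
      intro v
      rw [hM0, hM1, hM2, hM3, hM4]
      exact heval p hp v
    have hmid : ∀ x y u w : ℝ, 2*(M0*x^4 + M1*x^3*y + M2*x^2*y^2 + M3*x*y^3 + M4*y^4) ≤
        (M0*(x+u)^4 + M1*(x+u)^3*(y+w) + M2*(x+u)^2*(y+w)^2 + M3*(x+u)*(y+w)^3 + M4*(y+w)^4) +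
        (M0*(x-u)^4 + M1*(x-u)^3*(y-w) + M2*(x-u)^2*(y-w)^2 + M3*(x-u)*(y-w)^3 + M4*(y-w)^4) := by
      intro x y u w
      have h := hconv.2 (Set.mem_univ ![x+u, y+w]) (Set.mem_univ ![x-u, y-w])
        (by norm_num : (0:ℝ) ≤ 1/2) (by norm_num : (0:ℝ) ≤ 1/2) (by norm_num)
      have he : (1/2 : ℝ) • ![x+u, y+w] + (1/2 : ℝ) • ![x-u, y-w] = ![x, y] := by
        funext i
        fin_cases i <;> simp <;> ring
      rw [he] at h
      simp only [smul_eq_mul] at h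
      rw [hev ![x+u, y+w], hev ![x-u, y-w], hev ![x, y]] at h
      simp only [Matrix.cons_val_zero, Matrix.cons_val_one, Matrix.head_cons] at h
      linarith
    have hCc := conv_to_hess M0 (M1/4) (M2/6) (M3/4) M4 (by
      intro x y u w
      have h := hmid x y u w
      have e1 : ∀ X Y : ℝ, M0*X^4 + 4*(M1/4)*X^3*Y + 6*(M2/6)*X^2*Y^2 + 4*(M3/4)*X*Y^3 + M4*Y^4
          = M0*X^4 + M1*X^3*Y + M2*X^2*Y^2 + M3*X*Y^3 + M4*Y^4 := by intro X Y; ring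
      rw [e1, e1, e1]
      exact h)
    have hQ := hess_to_psd _ _ _ _ _ hCc
    obtain ⟨c, d, h0, h1, h2, h3, h4⟩ := decomp _ _ _ _ _ hQ
    refine ⟨3, c, d, ?_⟩
    apply MvPolynomial.funext
    intro v
    rw [map_sum]
    have hevterm : ∀ k : Fin 3, eval v ((MvPolynomial.C (c k) * X 0 + MvPolynomial.C (d k) * X 1) ^ 4)
        = (c k * v 0 + d k * v 1)^4 := by
      intro k; simp
    rw [Finset.sum_congr rfl (fun k _ => hevterm k), hev v, Fin.sum_univ_three]
    rw [Fin.sum_univ_three] at h0 h1 h2 h3 h4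
    linear_combination (v 0)^4*h0 + 4*(v 0)^3*(v 1)*h1 + 6*(v 0)^2*(v 1)^2*h2 +
      4*(v 0)*(v 1)^3*h3 + (v 1)^4*h4
  · rintro ⟨n, a, b, rfl⟩
    have he : (fun x : Fin 2 → ℝ =>
        eval x (∑ k, (MvPolynomial.C (a k) * X 0 + MvPolynomial.C (b k) * X 1) ^ 4))
        = fun x : Fin 2 → ℝ => ∑ k, (a k * x 0 + b k * x 1)^4 := by
      funext x
      rw [map_sum]
      simp
    rw [he]
    apply convexOn_finset_sum
    intro k _
    have hpow : ConvexOn ℝ Set.univ (fun z : ℝ => z ^ 4) := Even.convexOn_pow ⟨2, rfl⟩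
    let L : (Fin 2 → ℝ) →ₗ[ℝ] ℝ :=
      { toFun := fun x => a k * x 0 + b k * x 1
        map_add' := by intro x y; simp; ring
        map_smul' := by intro cc x; simp; ring }
    have h := hpow.comp_linearMap L
    exact h
end
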